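/- Fix n ≥ 1 and let F : Matrix (Fin n) (Fin n) ℝ → ℝ be a constant-coefficient Monge–Ampère operator, i.e., a finite linear combination with real constant coefficients of the functions A ↦ det(A.submatrix f g), where for each 1 ≤ k ≤ n, f and g range over strictly monotone maps Fin k → Fin n, together with a constant term. Then for every matrix A and every vector v ∈ ℝⁿ, the function t ↦ F(A + t · v·vᵀ) is affine in t: there exist α, β ∈ ℝ with F(A + t · v·vᵀ) = α + β·t for all t ∈ ℝ. In particular, the second derivative of F along any rank-one symmetric direction vanishes, so F satisfies the complete exceptionality condition S²(F) = 0. -/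

import Mathlib

/-- A constant-coefficient Monge–Ampère operator on `n × n` matrices:
a real linear combination of the constant `1` and of the minors
`A ↦ det (A.submatrix f g)` for strictly monotone `f g : Fin k → Fin n`,
`1 ≤ k ≤ n`. -/
def IsMongeAmpereOperator (n : ℕ) (F : Matrix (Fin n) (Fin n) ℝ → ℝ) : Prop :=
  F ∈ Submodule.span ℝ
    ({fun _ => (1 : ℝ)} ∪
      {G : Matrix (Fin n) (Fin n) ℝ → ℝ | ∃ (k : ℕ) (f g : Fin k → Fin n),
        1 ≤ k ∧ k ≤ n ∧ StrictMono f ∧ StrictMono g ∧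
        G = fun A => (A.submatrix f g).det})


open Matrix Finset

lemma det_zero_of_two_rows_smul {k : ℕ} (M : Matrix (Fin k) (Fin k) ℝ) (w : Fin k → ℝ)
    {i j : Fin k} (hij : i ≠ j) (a b : ℝ) (hi : M i = a • w) (hj : M j = b • w) :
    M.det = 0 := by
  have h1 : M.det = a * (M.updateRow i w).det := by
    conv_lhs => rw [← M.updateRow_eq_self i, hi]
    rw [Matrix.det_updateRow_smul]
  have h2 : (M.updateRow i w) j = b • w := by
    rw [Matrix.updateRow_ne hij.symm, hj]
  have h3 : (M.updateRow i w).det = b * ((M.updateRow i w).updateRow j w).det := by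
    conv_lhs => rw [← (M.updateRow i w).updateRow_eq_self j, h2]
    rw [Matrix.det_updateRow_smul]
  have h4 : ((M.updateRow i w).updateRow j w).det = 0 := by
    apply Matrix.det_zero_of_row_eq hij
    rw [Matrix.updateRow_ne hij, Matrix.updateRow_self, Matrix.updateRow_self]
  rw [h1, h3, h4]; ring

/-- determinant is affine along rank-one perturbations -/
lemma det_add_smul_vecMulVec {k : ℕ} (M : Matrix (Fin k) (Fin k) ℝ) (u w : Fin k → ℝ) :
    ∀ t : ℝ, (M + t • Matrix.vecMulVec u w).det
      = M.det + (∑ i, u i * (M.updateRow i w).det) * t := by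
  intro t
  classical
  set p : Matrix (Fin k) (Fin k) ℝ := fun i => (t * u i) • w with hp
  have hM : (M + t • Matrix.vecMulVec u w) = p + M := by
    ext i j
    show M i j + t * (u i * w j) = (t * u i) * w j + M i j
    ring
  have hdet : (M + t • Matrix.vecMulVec u w).det
      = ∑ s : Finset (Fin k), (Matrix.detRowAlternating (s.piecewise p M) : ℝ) := by
    rw [hM]
    exact (Matrix.detRowAlternating (R := ℝ) (n := Fin k)).toMultilinearMap.map_add_univ p M
  rw [hdet]
  -- the sum over subsets: only ∅ and singletons contribute
  have hzero : ∀ s : Finset (Fin k), s ∉ insert (∅ : Finset (Fin k)) (univ.image fun i => {i}) →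
      (Matrix.detRowAlternating (s.piecewise p M) : ℝ) = 0 := by
    intro s hs
    simp only [mem_insert, mem_image, mem_univ, true_and, not_or, not_exists] at hs
    have hcard : 1 < s.card := by
      rcases s.eq_empty_or_nonempty with h | h
      · exact absurd h hs.1
      rcases Nat.lt_or_ge 1 s.card with h' | h'
      · exact h'
      · interval_cases hh : s.card
        · exact absurd (Finset.card_eq_zero.mp hh) hs.1
        · obtain ⟨i, hi⟩ := Finset.card_eq_one.mp hh
          exact absurd hi.symm (hs.2 i)
    obtain ⟨i, hi, j, hj, hij⟩ := Finset.one_lt_card.mp hcard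
    apply det_zero_of_two_rows_smul (s.piecewise p M) w hij (t * u i) (t * u j)
    · exact Finset.piecewise_eq_of_mem _ _ _ hi
    · exact Finset.piecewise_eq_of_mem _ _ _ hj
  rw [← Finset.sum_subset (Finset.subset_univ _) (fun s _ hs => hzero s hs)]
  have hne : (∅ : Finset (Fin k)) ∉ univ.image (fun i : Fin k => ({i} : Finset (Fin k))) := by
    simp
  rw [Finset.sum_insert hne, Finset.sum_image (fun a _ b _ h => Finset.singleton_injective h)]
  have h0 : (Matrix.detRowAlternating ((∅ : Finset (Fin k)).piecewise p M) : ℝ) = M.det := by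
    erw [Finset.piecewise_empty]; rfl
  have h1 : ∀ i : Fin k, (Matrix.detRowAlternating (({i} : Finset (Fin k)).piecewise p M) : ℝ)
      = (t * u i) * (M.updateRow i w).det := by
    intro i
    erw [Finset.piecewise_singleton]
    have : Function.update M i (p i) = M.updateRow i ((t * u i) • w) := rfl
    rw [this]
    rw [show ((Matrix.detRowAlternating (M.updateRow i ((t * u i) • w)) : ℝ))
        = (M.updateRow i ((t * u i) • w)).det from rfl]
    rw [Matrix.det_updateRow_smul]
  rw [h0]
  rw [Finset.sum_congr rfl (fun i _ => h1 i)]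
  rw [Finset.sum_mul]
  congr 1
  apply Finset.sum_congr rfl
  intro i _
  ring
/-- A constant-coefficient Monge–Ampère operator is affine along every rank-one
symmetric direction `v vᵀ`; hence its second derivative along such directions
vanishes, i.e. `S²(F) = 0`. -/
theorem monge_ampere_affine_along_rank_one
    (n : ℕ) (hn : 1 ≤ n) (F : Matrix (Fin n) (Fin n) ℝ → ℝ)
    (hF : IsMongeAmpereOperator n F) :
    ∀ (A : Matrix (Fin n) (Fin n) ℝ) (v : Fin n → ℝ),
      ∃ α β : ℝ, ∀ t : ℝ,
        F (A + t • Matrix.vecMulVec v v) = α + β * t := by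
  refine Submodule.span_induction
    (p := fun G _ => ∀ (A : Matrix (Fin n) (Fin n) ℝ) (v : Fin n → ℝ),
      ∃ α β : ℝ, ∀ t : ℝ, G (A + t • Matrix.vecMulVec v v) = α + β * t)
    ?_ ?_ ?_ ?_ hF
  · rintro G (hG | ⟨k, f, g, hk1, hkn, hf, hg, rfl⟩) A v
    · rcases hG with rfl
      exact ⟨1, 0, fun t => by ring⟩
    · have key : ∀ t : ℝ, (A + t • Matrix.vecMulVec v v).submatrix f g
          = A.submatrix f g + t • Matrix.vecMulVec (v ∘ f) (v ∘ g) := by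
        intro t; ext i j
        simp [Matrix.vecMulVec, Matrix.submatrix, Matrix.add_apply, Matrix.smul_apply]
      refine ⟨(A.submatrix f g).det,
        ∑ i, (v ∘ f) i * ((A.submatrix f g).updateRow i (v ∘ g)).det, fun t => ?_⟩
      show ((A + t • Matrix.vecMulVec v v).submatrix f g).det = _
      rw [key t]
      exact det_add_smul_vecMulVec (A.submatrix f g) (v ∘ f) (v ∘ g) t
  · intro A v
    exact ⟨0, 0, fun t => by simp⟩
  · rintro G H _ _ hG hH A v
    obtain ⟨a1, b1, h1⟩ := hG A v
    obtain ⟨a2, b2, h2⟩ := hH A v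
    exact ⟨a1 + a2, b1 + b2, fun t => by simp [h1 t, h2 t]; ring⟩
  · rintro c G _ hG A v
    obtain ⟨a, b, h⟩ := hG A v
    exact ⟨c * a, c * b, fun t => by simp [h t]; ring⟩
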